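/- For every natural number n ≥ 2, the polynomial P_{2n}(x) = x^(2n) − x^(n+1) − x^n − x^(n−1) + 1 has exactly one real root α_n in the open interval (2^(1/n), 3^(1/n)), and every complex root z of P_{2n} satisfies |z| ≤ α_n. In other words, the house of P_{2n} equals α_n. -/

import Mathlib

set_option maxHeartbeats 1000000

lemma rpow_pow_eq (c : ℝ) (hc : 0 ≤ c) (k : ℕ) (hk : k ≠ 0) :
    (c ^ ((1:ℝ)/(k:ℝ))) ^ k = c := by
  rw [← Real.rpow_natCast (c ^ ((1:ℝ)/(k:ℝ))) k, ← Real.rpow_mul hc]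
  rw [one_div_mul_cancel (by exact_mod_cast hk : ((k:ℝ) ≠ 0)), Real.rpow_one]

lemma quad_aux (M x : ℝ) (hM : 0 ≤ M) (hx1 : 1 ≤ x) (hx3 : x^2 ≤ 3) :
    (M+3)*x^2 + (M+1) ≤ (3*M+6)*x := by
  have h17 : x ≤ 17321/10000 := by nlinarith
  nlinarith [mul_nonneg (sub_nonneg.2 hx1) (sub_nonneg.2 h17),
    mul_nonneg hM (sub_nonneg.2 hx1), mul_nonneg hM (sub_nonneg.2 h17),
    mul_nonneg (mul_nonneg hM (sub_nonneg.2 hx1)) (sub_nonneg.2 h17)]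

lemma abstract_circle (A A' B C u v c d : ℝ)
    (e1 : u*A = c*B + 1) (e2 : v*A' = d*C)
    (hu : u^2 + v^2 = 1) (hc : c^2 + d^2 = 1)
    (hA : B + 1 < A) (hA' : 0 < A') (hB : 0 < B) (hC : 0 ≤ C)
    (hlead : C*A ≤ B*A') : False := by
  have hc1 : c^2 ≤ 1 := by nlinarith [sq_nonneg d]
  have hcl : -1 ≤ c := by nlinarith [sq_nonneg (c+1), sq_nonneg d]
  have hcr : c ≤ 1 := by nlinarith [sq_nonneg (c-1), sq_nonneg d]
  have sq1 : (c*B+1)^2 = u^2*A^2 := by linear_combination (c*B+1+u*A) * e1.symm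
  have sq2 : d^2*C^2 = v^2*A'^2 := by linear_combination (d*C+v*A') * e2.symm
  have star : (c*B+1)^2*A'^2 + (1-c^2)*C^2*A^2 = A^2*A'^2 := by
    linear_combination A'^2*sq1 + A^2*sq2 - C^2*A^2*hc + A^2*A'^2*hu
  have hT1 : 0 < A'^2 * (A^2 - (B+1)^2) := by
    apply mul_pos (by positivity)
    nlinarith
  have h4 : 0 ≤ B*A'^2*(1-c) :=
    mul_nonneg (mul_nonneg hB.le (sq_nonneg A')) (by linarith)
  have h5 : 0 ≤ (B^2*A'^2 - C^2*A^2)*(1-c^2) := by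
    apply mul_nonneg _ (by nlinarith)
    have hCA : 0 ≤ C*A := mul_nonneg hC (by linarith)
    nlinarith [mul_le_mul hlead hlead hCA (mul_nonneg hB.le hA'.le)]
  nlinarith [star, hT1, h4, h5]

lemma G_aux (a r p q : ℝ) (ha : 1 < a) (hr : a < r) (hq : 2 < q) (hp : q < p)
    (hpmq : 2*(r-a) ≤ p - q) (hq_id : q + 1/q = a + 1 + 1/a) :
    r + 1/r + 1 < p + 1/p := by
  have hq0 : 0 < q := by linarith
  have hp0 : 0 < p := by linarith
  have ha0 : 0 < a := by linarith
  have hr0 : 0 < r := by linarith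
  have hpq_id : p + 1/p - (q + 1/q) = (p - q)*(1 - 1/(p*q)) := by
    field_simp; ring
  have hr_id : r + 1/r - (a + 1/a) = (r - a)*(1 - 1/(r*a)) := by
    field_simp; ring
  have hpq4 : 4 < p*q := by nlinarith
  have hfrac1 : (3:ℝ)/4 ≤ 1 - 1/(p*q) := by
    have : 1/(p*q) ≤ 1/4 := by
      apply one_div_le_one_div_of_le <;> linarith
    linarith
  have key1 : 2*(r-a) * (3/4) ≤ (p-q)*(1 - 1/(p*q)) :=
    mul_le_mul hpmq hfrac1 (by norm_num) (by linarith)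
  have key2 : (r-a)*(1 - 1/(r*a)) ≤ (r-a)*1 := by
    apply mul_le_mul_of_nonneg_left _ (by linarith)
    have : 0 < 1/(r*a) := by positivity
    linarith
  nlinarith [hpq_id, hr_id, key1, key2, hq_id]

noncomputable def ff (m : ℕ) : ℝ → ℝ :=
  fun x => x^(2*m+4) - x^(m+3) - x^(m+2) - x^(m+1) + 1

lemma ff_cont (m : ℕ) : Continuous (ff m) := by
  unfold ff
  exact ((((continuous_pow (2*m+4)).sub (continuous_pow (m+3))).sub
    (continuous_pow (m+2))).sub (continuous_pow (m+1))).add continuous_const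

lemma ff_strictMono (m : ℕ) {a b : ℝ} (ha1 : 1 < a) (ha : a^(m+2) = 2)
    (hb3 : ∀ x ∈ Set.Icc a b, x^2 ≤ 3) :
    StrictMonoOn (ff m) (Set.Icc a b) := by
  apply strictMonoOn_of_deriv_pos (convex_Icc a b) (ff_cont m).continuousOn
  intro x hx
  rw [interior_Icc] at hx
  have hxa : a < x := hx.1
  have hx1 : 1 < x := lt_trans ha1 hxa
  have hx0 : 0 < x := by linarith
  have hderiv : HasDerivAt (ff m)
      (((2*m+4):ℕ)*x^(2*m+3) - (((m+3):ℕ)*x^(m+2) + (((m+2):ℕ)*x^(m+1) + ((m+1):ℕ)*x^m)) ) x := by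
    have h := ((((hasDerivAt_pow (2*m+4) x).sub
      ((hasDerivAt_pow (m+3) x).add ((hasDerivAt_pow (m+2) x).add (hasDerivAt_pow (m+1) x)))).add_const 1))
    have e1 : 2*m+4-1 = 2*m+3 := by omega
    have e2 : m+3-1 = m+2 := by omega
    have e3 : m+2-1 = m+1 := by omega
    have e4 : m+1-1 = m := by omega
    rw [e1, e2, e3, e4] at h
    have funeq : ff m = fun x : ℝ => x ^ (2*m+4) - (x^(m+3) + (x^(m+2) + x^(m+1))) + 1 := by
      funext y; unfold ff; ring
    rw [funeq]
    exact h
  rw [hderiv.deriv]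
  have h2 : 2 < x^(m+2) := by
    calc (2:ℝ) = a^(m+2) := ha.symm
    _ < x^(m+2) := by
      apply pow_lt_pow_left₀ hxa (by linarith) (by omega)
  have hx3 : x^2 ≤ 3 := hb3 x ⟨hxa.le, hx.2.le⟩
  have hq := quad_aux (m:ℝ) x (by positivity) hx1.le hx3
  have hfac : 0 < ((2:ℝ)*m+4)*x*(x^(m+2) - 2) := by
    apply mul_pos (by positivity); linarith
  have hxm : (0:ℝ) < x^m := by positivity
  have key : ((m:ℝ)+3)*x^2 + ((m:ℝ)+2)*x + ((m:ℝ)+1) < (2*(m:ℝ)+4)*(x^(m+2)*x) := by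
    nlinarith [hq, hfac, hx1]
  have expand : (((2*m+4):ℕ):ℝ)*x^(2*m+3) - ((((m+3):ℕ):ℝ)*x^(m+2) + ((((m+2):ℕ):ℝ)*x^(m+1) + (((m+1):ℕ):ℝ)*x^m))
      = x^m * ((2*(m:ℝ)+4)*(x^(m+2)*x) - (((m:ℝ)+3)*x^2 + ((m:ℝ)+2)*x + ((m:ℝ)+1))) := by
    push_cast; ring
  rw [expand]
  exact mul_pos hxm (by linarith)

lemma complex_part (m : ℕ) (α : ℝ) (hα1 : 1 < α) (ha2' : 2 < α^(m+2))
    (hq_id : α^(m+2) + 1/(α^(m+2)) = α + 1 + 1/α) :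
    (∀ z : ℂ, z ^ (2*m+4) - z ^ (m+3) - z ^ (m+2) - z ^ (m+1) + 1 = 0 →
        ‖z‖ ≤ α) := by
  · intro z hz
    by_contra hlt
    push_neg at hlt
    -- hlt : α < Complex.abs z
    have hz0 : z ≠ 0 := by
      intro h
      rw [h] at hz
      simp [zero_pow, Nat.add_eq_zero] at hz
    set r : ℝ := ‖z‖ with hrdef
    have hr0 : 0 < r := norm_pos_iff.mpr hz0
    have hr1 : 1 < r := lt_trans hα1 hlt
    have hα0 : (0:ℝ) < α := by linarith
    have hq2 : 2 < α^(m+2) := ha2'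
    set p : ℝ := r^(m+2) with hpdef
    have hp0 : 0 < p := by positivity
    have hrp : r < p := by
      calc r = r^1 := (pow_one r).symm
        _ < r^(m+2) := pow_lt_pow_right₀ hr1 (by omega)
    have hp1 : 1 < p := by linarith
    -- the key inequality p + 1/p > r + 1/r + 1
    have hqp : α^(m+2) < p := by
      rw [hpdef]; exact pow_lt_pow_left₀ hlt hα0.le (by omega)
    have hpmq : 2*(r-α) ≤ p - α^(m+2) := by
      have s1 : α^m * r^2 ≤ r^(m+2) := by
        rw [show m+2 = m+2 from rfl, pow_add]
        exact mul_le_mul_of_nonneg_right (pow_le_pow_left₀ hα0.le (le_of_lt hlt) m) (by positivity)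
      have s2 : (1:ℝ) ≤ α^m := one_le_pow₀ hα1.le
      have s3 : α^(m+2) = α^m * α^2 := pow_add α m 2
      nlinarith [sq_nonneg (r-α), mul_nonneg (sub_nonneg.2 s2) (sub_nonneg.2 (by nlinarith : α^2 ≤ r^2))]
    have hA : r + 1/r + 1 < p + 1/p := G_aux α r p (α^(m+2)) hα1 hlt hq2 hqp hpmq hq_id
    -- complex manipulation
    have hww : z * ((z^(m+2))^2 + 1) = z^(m+2) * (z^2 + z + 1) := by
      linear_combination z * hz
    have hw0 : z^(m+2) ≠ 0 := pow_ne_zero _ hz0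
    have hdiv : z^(m+2) + (z^(m+2))⁻¹ = z + 1 + z⁻¹ := by
      field_simp
      linear_combination hww
    have hre := congrArg Complex.re hdiv
    have him := congrArg Complex.im hdiv
    simp only [Complex.add_re, Complex.add_im, Complex.inv_re, Complex.inv_im,
      Complex.one_re, Complex.one_im] at hre him
    have hnsz : Complex.normSq z = r^2 := by
      rw [hrdef, ← Complex.sq_norm]
    have hnsw : Complex.normSq (z^(m+2)) = p^2 := by
      rw [← Complex.sq_norm, norm_pow, ← hrdef, hpdef]
    rw [hnsz, hnsw] at hre him
    set x := z.re
    set y := z.im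
    set X := (z^(m+2)).re
    set Y := (z^(m+2)).im
    have hxy : x^2 + y^2 = r^2 := by
      rw [← hnsz, Complex.normSq_apply]; ring
    have hXY : X^2 + Y^2 = p^2 := by
      rw [← hnsw, Complex.normSq_apply]; ring
    -- build hypotheses of abstract_circle
    have e1 : (X/p)*(p + 1/p) = (x/r)*(r + 1/r) + 1 := by
      field_simp
      field_simp at hre
      linear_combination hre
    have e2 : (Y/p)*(p - 1/p) = (y/r)*(r - 1/r) := by
      field_simp
      field_simp at him
      linear_combination him
    have hu : (X/p)^2 + (Y/p)^2 = 1 := by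
      field_simp
      linear_combination hXY
    have hc : (x/r)^2 + (y/r)^2 = 1 := by
      field_simp
      linear_combination hxy
    have hA' : 0 < p - 1/p := by
      have : 1/p < 1 := by rw [div_lt_one hp0]; exact hp1
      linarith
    have hB : 0 < r + 1/r := by positivity
    have hC : 0 ≤ r - 1/r := by
      have : 1/r ≤ 1 := by rw [div_le_one hr0]; exact hr1.le
      linarith
    have hlead : (r - 1/r)*(p + 1/p) ≤ (r + 1/r)*(p - 1/p) := by
      have hid : (r + 1/r)*(p - 1/p) - (r - 1/r)*(p + 1/p) = 2*(p/r - r/p) := by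
        field_simp; ring
      have h2 : r/p ≤ p/r := by
        rw [div_le_div_iff₀ hp0 hr0]; nlinarith
      linarith
    exact abstract_circle (p + 1/p) (p - 1/p) (r + 1/r) (r - 1/r) (X/p) (Y/p) (x/r) (y/r)
      e1 e2 hu hc hA hA' hB hC hlead

theorem P2n_house_eq_real_root (n : ℕ) (hn : 2 ≤ n) :
    ∃ α : ℝ, α ∈ Set.Ioo ((2 : ℝ) ^ ((1 : ℝ) / (n : ℝ))) ((3 : ℝ) ^ ((1 : ℝ) / (n : ℝ))) ∧
      α ^ (2 * n) - α ^ (n + 1) - α ^ n - α ^ (n - 1) + 1 = 0 ∧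
      (∀ β ∈ Set.Ioo ((2 : ℝ) ^ ((1 : ℝ) / (n : ℝ))) ((3 : ℝ) ^ ((1 : ℝ) / (n : ℝ))),
        β ^ (2 * n) - β ^ (n + 1) - β ^ n - β ^ (n - 1) + 1 = 0 → β = α) ∧
      (∀ z : ℂ, z ^ (2 * n) - z ^ (n + 1) - z ^ n - z ^ (n - 1) + 1 = 0 →
        ‖z‖ ≤ α) := by
  obtain ⟨m, rfl⟩ : ∃ m, n = m + 2 := ⟨n - 2, by omega⟩
  have E1 : 2 * (m+2) = 2*m+4 := by omega
  have E2 : (m+2) + 1 = m+3 := by omega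
  have E3 : (m+2) - 1 = m+1 := by omega
  simp only [E1, E2, E3]
  set a : ℝ := (2 : ℝ) ^ ((1 : ℝ) / ((m+2 : ℕ) : ℝ)) with hadef
  set b : ℝ := (3 : ℝ) ^ ((1 : ℝ) / ((m+2 : ℕ) : ℝ)) with hbdef
  have hcastpos : (0:ℝ) < ((m+2 : ℕ) : ℝ) := by positivity
  have hexp : (0:ℝ) < (1 : ℝ) / ((m+2 : ℕ) : ℝ) := by positivity
  have ha2 : a^(m+2) = 2 := rpow_pow_eq 2 (by norm_num) (m+2) (by omega)
  have hb3 : b^(m+2) = 3 := rpow_pow_eq 3 (by norm_num) (m+2) (by omega)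
  have ha1 : 1 < a := by
    rw [hadef]
    exact Real.one_lt_rpow_iff_of_pos (by norm_num) |>.2 (Or.inl ⟨by norm_num, hexp⟩)
  have hb1 : 1 < b := by
    rw [hbdef]
    exact Real.one_lt_rpow_iff_of_pos (by norm_num) |>.2 (Or.inl ⟨by norm_num, hexp⟩)
  have hab : a < b := by
    rw [hadef, hbdef]
    exact Real.rpow_lt_rpow (by norm_num) (by norm_num) hexp
  have hbsq : b^2 ≤ 3 := by
    have h1 : b^2 = (3:ℝ) ^ (((1 : ℝ) / ((m+2 : ℕ) : ℝ)) * 2) := by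
      rw [hbdef, ← Real.rpow_natCast ((3:ℝ) ^ ((1 : ℝ) / ((m+2 : ℕ) : ℝ))) 2,
        ← Real.rpow_mul (by norm_num)]
      norm_num
    rw [h1]
    calc (3:ℝ) ^ (((1 : ℝ) / ((m+2 : ℕ) : ℝ)) * 2) ≤ (3:ℝ) ^ (1:ℝ) := by
          apply Real.rpow_le_rpow_of_exponent_le (by norm_num)
          rw [div_mul_eq_mul_div, one_mul, div_le_one hcastpos]
          have : (2:ℝ) ≤ ((m+2:ℕ):ℝ) := by exact_mod_cast Nat.le_add_left 2 m
          linarith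
      _ = 3 := Real.rpow_one 3
  have hIccsq : ∀ x ∈ Set.Icc a b, x^2 ≤ 3 := by
    intro x hx
    have hx0 : 0 ≤ x := by linarith [hx.1, ha1]
    calc x^2 ≤ b^2 := by apply pow_le_pow_left₀ hx0 hx.2
      _ ≤ 3 := hbsq
  -- value at a
  have ha0 : (0:ℝ) < a := by linarith
  have hpow_a1 : a^(2*m+4) = 4 := by
    rw [show 2*m+4 = (m+2)*2 by ring, pow_mul, ha2]; norm_num
  have hpow_a2 : a^(m+3) = 2*a := by
    rw [show m+3 = (m+2)+1 by omega, pow_succ, ha2]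
  have hpow_a3 : a^(m+1) = 2/a := by
    rw [eq_div_iff (ne_of_gt ha0), ← pow_succ, show m+1+1 = m+2 by omega, ha2]
  have hfa : ff m a < 0 := by
    unfold ff
    rw [hpow_a1, hpow_a2, hpow_a3, ha2]
    have key : (3 - 2*a) * a < 2 := by nlinarith [sq_nonneg (a-1)]
    have : 3 - 2*a < 2/a := by
      rw [lt_div_iff₀ ha0]; exact key
    linarith
  -- value at b
  have hb0 : (0:ℝ) < b := by linarith
  have hpow_b1 : b^(2*m+4) = 9 := by
    rw [show 2*m+4 = (m+2)*2 by ring, pow_mul, hb3]; norm_num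
  have hpow_b2 : b^(m+3) = 3*b := by
    rw [show m+3 = (m+2)+1 by omega, pow_succ, hb3]
  have hpow_b3 : b^(m+1) = 3/b := by
    rw [eq_div_iff (ne_of_gt hb0), ← pow_succ, show m+1+1 = m+2 by omega, hb3]
  have hfb : 0 < ff m b := by
    unfold ff
    rw [hpow_b1, hpow_b2, hpow_b3, hb3]
    have hb174 : b ≤ 174/100 := by nlinarith
    have key : (7 - 3*b) * b > 3 := by
      nlinarith [mul_nonneg (sub_nonneg.2 hb1.le) (sub_nonneg.2 hb174)]
    have : 3/b < 7 - 3*b := by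
      rw [div_lt_iff₀ hb0]; linarith
    linarith
  -- IVT
  obtain ⟨α, hαmem, hfα⟩ := intermediate_value_Ioo hab.le (ff_cont m).continuousOn ⟨hfa, hfb⟩
  have hmono := ff_strictMono m ha1 ha2 hIccsq
  have hα1 : 1 < α := lt_trans ha1 hαmem.1
  have hα0 : (0:ℝ) < α := by linarith
  refine ⟨α, hαmem, ?_, ?_, ?_⟩
  · have : ff m α = 0 := hfα
    unfold ff at this; linarith
  · intro β hβ hβ0
    have hβf : ff m β = 0 := by unfold ff; linarith
    exact hmono.injOn (Set.Ioo_subset_Icc_self hβ) (Set.Ioo_subset_Icc_self hαmem)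
      (by rw [hβf, hfα])
  · have hq2 : 2 < α^(m+2) := by
      rw [← ha2]; exact pow_lt_pow_left₀ hαmem.1 ha0.le (by omega)
    have hq_id : α^(m+2) + 1/(α^(m+2)) = α + 1 + 1/α := by
      have hffα : ff m α = 0 := hfα
      unfold ff at hffα
      have hαm2 : (0:ℝ) < α^(m+2) := by positivity
      field_simp
      linear_combination α * hffα
    exact complex_part m α hα1 hq2 hq_id
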